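/- Fix σ > 0 and x ∈ ℂ with |x| = 1. If y = x + σ·w with w ~ CN(0,1), then the variance of the mismatched information density is Var(i_M(x;y)) = 1 − 1/(1 + 1/σ²)². -/

import Mathlib

open MeasureTheory ProbabilityTheory Real Set
open scoped ENNReal NNReal


lemma pdf_eq (t : ℝ) : gaussianPDFReal 0 (1/2) t = (√π)⁻¹ * rexp (-t^2) := by
  rw [gaussianPDFReal]
  have h2 : (√2:ℝ) ≠ 0 := by positivity
  norm_num
  field_simp

lemma pdf_meas : Measurable (fun t => Real.toNNReal (gaussianPDFReal 0 (1/2) t)) :=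
  (measurable_gaussianPDFReal 0 (1/2)).real_toNNReal

lemma gauss_withDensity : gaussianReal 0 (1/2) =
    volume.withDensity (fun t => (↑(Real.toNNReal (gaussianPDFReal 0 (1/2) t)) : ℝ≥0∞)) := by
  rw [gaussianReal_of_var_ne_zero _ (by norm_num)]
  rfl

lemma gint (g : ℝ → ℝ) : ∫ t, g t ∂(gaussianReal 0 (1/2))
    = ∫ t, ((√π)⁻¹ * rexp (-t^2)) * g t := by
  rw [gauss_withDensity, integral_withDensity_eq_integral_smul pdf_meas g]
  congr 1; funext t
  rw [NNReal.smul_def, Real.coe_toNNReal _ (gaussianPDFReal_nonneg _ _ _), pdf_eq, smul_eq_mul]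

lemma gintegrable (g : ℝ → ℝ) (h : Integrable (fun t => ((√π)⁻¹ * rexp (-t^2)) * g t) volume) :
    Integrable g (gaussianReal 0 (1/2)) := by
  rw [gauss_withDensity, integrable_withDensity_iff_integrable_smul pdf_meas]
  refine h.congr (Filter.Eventually.of_forall fun t => ?_)
  show _ = (gaussianPDFReal 0 (1/2) t).toNNReal • g t
  rw [NNReal.smul_def, Real.coe_toNNReal _ (gaussianPDFReal_nonneg _ _ _), pdf_eq, smul_eq_mul]

lemma odd_int_zero (g : ℝ → ℝ) (hg : ∀ t, g (-t) = - g t) : ∫ t : ℝ, g t = 0 := by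
  have e := MeasureTheory.integral_map_equiv (μ := (volume : Measure ℝ))
    (Homeomorph.neg ℝ).toMeasurableEquiv g
  have hcoe : ((Homeomorph.neg ℝ).toMeasurableEquiv : ℝ → ℝ) = fun x : ℝ => -x := rfl
  have hmap : Measure.map (⇑(Homeomorph.neg ℝ).toMeasurableEquiv) (volume : Measure ℝ) = volume := by
    rw [hcoe]; exact Measure.map_neg_eq_self _
  rw [hmap, hcoe] at e
  simp_rw [hg] at e
  rw [integral_neg] at e
  linarith

lemma int_sq_exp : ∫ t : ℝ, t^2 * Real.exp (-t^2) = Real.sqrt Real.pi / 2 := by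
  have h := integral_comp_abs (f := fun t => t^2 * Real.exp (-t^2))
  simp only [sq_abs] at h
  rw [h]
  have h2 : ∫ t in Ioi (0:ℝ), t^2 * Real.exp (-t^2) =
      ∫ t in Ioi (0:ℝ), t ^ (2:ℝ) * Real.exp (-1 * t ^ (2:ℝ)) := by
    refine setIntegral_congr_fun measurableSet_Ioi (fun t ht => ?_)
    rw [show (2:ℝ) = ((2:ℕ):ℝ) by norm_num, Real.rpow_natCast]
    norm_num
  rw [h2, integral_rpow_mul_exp_neg_mul_rpow (by norm_num) (by norm_num) (by norm_num)]
  rw [show ((2:ℝ)+1)/2 = 1/2 + 1 by norm_num, Real.Gamma_add_one (by norm_num),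
    Real.Gamma_one_half_eq, Real.one_rpow]
  ring

lemma int_quart_exp : ∫ t : ℝ, t^4 * Real.exp (-t^2) = 3 * Real.sqrt Real.pi / 4 := by
  have h := integral_comp_abs (f := fun t => t^4 * Real.exp (-t^2))
  simp only [show ∀ t:ℝ, |t|^4 = t^4 from fun t => by
      rw [pow_abs]; exact abs_of_nonneg (by positivity), sq_abs] at h
  rw [h]
  have h2 : ∫ t in Ioi (0:ℝ), t^4 * Real.exp (-t^2) =
      ∫ t in Ioi (0:ℝ), t ^ (4:ℝ) * Real.exp (-1 * t ^ (2:ℝ)) := by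
    refine setIntegral_congr_fun measurableSet_Ioi (fun t ht => ?_)
    rw [show (4:ℝ) = ((4:ℕ):ℝ) by norm_num, Real.rpow_natCast,
      show (2:ℝ) = ((2:ℕ):ℝ) by norm_num, Real.rpow_natCast]
    norm_num
  rw [h2, integral_rpow_mul_exp_neg_mul_rpow (by norm_num) (by norm_num) (by norm_num)]
  rw [show ((4:ℝ)+1)/2 = (1/2 + 1) + 1 by norm_num, Real.Gamma_add_one (by norm_num),
    Real.Gamma_add_one (by norm_num), Real.Gamma_one_half_eq, Real.one_rpow]
  ring

lemma sqrtpi_ne : (Real.sqrt Real.pi) ≠ 0 := by positivity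

lemma int_pow_gauss (n : ℕ) : Integrable (fun t : ℝ => t^n) (gaussianReal 0 (1/2)) := by
  refine gintegrable _ ?_
  have h := integrable_rpow_mul_exp_neg_mul_sq (b := 1) (by norm_num)
    (s := (n:ℝ)) (neg_one_lt_zero.trans_le (Nat.cast_nonneg n))
  simp_rw [Real.rpow_natCast, neg_one_mul] at h
  exact (h.const_mul ((√π)⁻¹)).congr (Filter.Eventually.of_forall fun t => by ring)

lemma m1 : ∫ t, t ∂(gaussianReal 0 (1/2)) = 0 := by
  rw [gint]
  apply odd_int_zero
  intro t; rw [neg_sq]; ring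

lemma m3 : ∫ t, t^3 ∂(gaussianReal 0 (1/2)) = 0 := by
  rw [gint]
  apply odd_int_zero
  intro t; rw [neg_sq]; ring

lemma m2 : ∫ t, t^2 ∂(gaussianReal 0 (1/2)) = 1/2 := by
  rw [gint]
  simp_rw [mul_assoc, mul_comm (rexp _)]
  rw [integral_const_mul, int_sq_exp]
  field_simp

lemma m4 : ∫ t, t^4 ∂(gaussianReal 0 (1/2)) = 3/4 := by
  rw [gint]
  simp_rw [mul_assoc, mul_comm (rexp _)]
  rw [integral_const_mul, int_quart_exp]
  field_simp

lemma int_one_gauss : Integrable (fun t : ℝ => t) (gaussianReal 0 (1/2)) := by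
  simpa using int_pow_gauss 1

lemma int_quad_eval (K α β : ℝ) :
    ∫ t, (K + (α*t^2 + β*t)) ∂(gaussianReal 0 (1/2)) = K + α/2 := by
  have i2 : Integrable (fun t : ℝ => α * t^2) (gaussianReal 0 (1/2)) :=
    (int_pow_gauss 2).const_mul α
  have i1 : Integrable (fun t : ℝ => β * t) (gaussianReal 0 (1/2)) :=
    int_one_gauss.const_mul β
  have i21 : Integrable (fun t : ℝ => α * t^2 + β * t) (gaussianReal 0 (1/2)) := i2.add i1
  rw [integral_add (integrable_const K) i21, integral_add i2 i1,
    integral_const_mul, integral_const_mul, m2, m1, integral_const]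
  simp
  ring

lemma int_quad_sq (K α β : ℝ) :
    Integrable (fun t : ℝ => (K + (α*t^2 + β*t))^2) (gaussianReal 0 (1/2)) := by
  have h : Integrable (fun t : ℝ => α^2*t^4 + (2*α*β)*t^3 + (β^2+2*K*α)*t^2 + (2*K*β)*t + K^2)
      (gaussianReal 0 (1/2)) :=
    (((((int_pow_gauss 4).const_mul _).add ((int_pow_gauss 3).const_mul _)).add
      ((int_pow_gauss 2).const_mul _)).add (int_one_gauss.const_mul _)).add (integrable_const _)
  exact h.congr (Filter.Eventually.of_forall fun t => by ring)

lemma int_quad_sq_eval (K α β : ℝ) :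
    ∫ t, (K + (α*t^2 + β*t))^2 ∂(gaussianReal 0 (1/2))
      = α^2*(3/4) + (β^2+2*K*α)*(1/2) + K^2 := by
  have he : (fun t : ℝ => (K + (α*t^2 + β*t))^2)
      = fun t : ℝ => α^2*t^4 + (2*α*β*t^3 + ((β^2+2*K*α)*t^2 + (2*K*β*t + K^2))) := by
    funext t; ring
  have i4 : Integrable (fun t : ℝ => α^2 * t^4) (gaussianReal 0 (1/2)) :=
    (int_pow_gauss 4).const_mul _
  have i3 : Integrable (fun t : ℝ => 2*α*β * t^3) (gaussianReal 0 (1/2)) :=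
    (int_pow_gauss 3).const_mul _
  have i2 : Integrable (fun t : ℝ => (β^2+2*K*α) * t^2) (gaussianReal 0 (1/2)) :=
    (int_pow_gauss 2).const_mul _
  have i1 : Integrable (fun t : ℝ => 2*K*β * t) (gaussianReal 0 (1/2)) :=
    int_one_gauss.const_mul _
  have i0 : Integrable (fun _ : ℝ => K^2) (gaussianReal 0 (1/2)) := integrable_const _
  have i10 : Integrable (fun t : ℝ => 2*K*β*t + K^2) (gaussianReal 0 (1/2)) := i1.add i0
  have i210 : Integrable (fun t : ℝ => (β^2+2*K*α)*t^2 + (2*K*β*t + K^2))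
      (gaussianReal 0 (1/2)) := i2.add i10
  have i3210 : Integrable (fun t : ℝ => 2*α*β*t^3 + ((β^2+2*K*α)*t^2 + (2*K*β*t + K^2)))
      (gaussianReal 0 (1/2)) := i3.add i210
  rw [he, integral_add i4 i3210, integral_add i3 i210, integral_add i2 i10,
    integral_add i1 i0, integral_const_mul, integral_const_mul, integral_const_mul,
    integral_const_mul, m1, m2, m3, m4, integral_const]
  simp
  ring

lemma meas_quad (K α β : ℝ) : Measurable (fun t : ℝ => K + (α*t^2 + β*t)) :=
  measurable_const.add (((measurable_id.pow_const 2).const_mul α).add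
    (measurable_id.const_mul β))

lemma memLp_quad (K α β : ℝ) :
    MemLp (fun t : ℝ => K + (α*t^2 + β*t)) 2 (gaussianReal 0 (1/2)) := by
  rw [memLp_two_iff_integrable_sq (meas_quad K α β).aestronglyMeasurable]
  exact int_quad_sq K α β

lemma var_quad (K α β : ℝ) :
    variance (fun t : ℝ => K + (α*t^2 + β*t)) (gaussianReal 0 (1/2)) = α^2/2 + β^2/2 := by
  rw [variance_eq_sub (memLp_quad K α β)]
  have h2 : (fun t : ℝ => K + (α*t^2 + β*t))^2 = fun t : ℝ => (K + (α*t^2 + β*t))^2 := by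
    funext t; simp [Pi.pow_apply]
  rw [h2, int_quad_sq_eval, int_quad_eval]
  ring

lemma variance_comp {Ω α : Type*} [MeasurableSpace Ω] [MeasurableSpace α] (μ : Measure Ω)
    (w : Ω → α) (hw : Measurable w) (g : α → ℝ) (hg : Measurable g) :
    variance (fun ω => g (w ω)) μ = variance g (μ.map w) := by
  rw [variance, variance, evariance, evariance,
    integral_map hw.aemeasurable hg.aestronglyMeasurable]
  rw [lintegral_map (by measurability) hw]

noncomputable def stdComplexGaussian : Measure ℂ :=
  Measure.map (fun q : ℝ × ℝ => (q.1 : ℂ) + (q.2 : ℂ) * Complex.I)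
    ((gaussianReal 0 (1 / 2)).prod (gaussianReal 0 (1 / 2)))

noncomputable def infoDensity (σ : ℝ) (x y : ℂ) : ℝ :=
  Real.log ((1 / (Real.pi * σ ^ 2) * Real.exp (-‖y - x‖ ^ 2 / σ ^ 2)) /
            (1 / (Real.pi * (1 + σ ^ 2)) * Real.exp (-‖y‖ ^ 2 / (1 + σ ^ 2))))

lemma indep_fst_snd {α β : Type*} [MeasurableSpace α] [MeasurableSpace β]
    (μ : Measure α) (ν : Measure β) [IsProbabilityMeasure μ] [IsProbabilityMeasure ν] :
    IndepFun Prod.fst Prod.snd (μ.prod ν) := by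
  rw [indepFun_iff_map_prod_eq_prod_map_map measurable_fst.aemeasurable
    measurable_snd.aemeasurable]
  simp only [Measure.map_fst_prod, Measure.map_snd_prod, measure_univ, one_smul]
  rw [show (fun ω : α × β => (ω.1, ω.2)) = id from rfl, Measure.map_id]

lemma csq (z : ℂ) : ‖z‖^2 = z.re^2 + z.im^2 := by
  rw [Complex.sq_norm, Complex.normSq_apply]
  ring

lemma key (σ : ℝ) (hσ : 0 < σ) (x z : ℂ) :
    infoDensity σ x (x + σ*z)
      = Real.log ((1+σ^2)/σ^2) - ‖z‖^2 + (1/(1+σ^2)) * ‖x + σ*z‖^2 := by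
  have hσ2 : (0:ℝ) < σ^2 := by positivity
  have h1 : (0:ℝ) < 1+σ^2 := by positivity
  have hπ := Real.pi_pos
  rw [infoDensity, show (x + σ*z) - x = (σ:ℂ)*z by ring]
  have hnorm : ‖(σ:ℂ)*z‖^2 = σ^2 * ‖z‖^2 := by
    rw [norm_mul, Complex.norm_real, Real.norm_eq_abs, mul_pow, sq_abs]
  rw [hnorm, Real.log_div (by positivity) (by positivity),
    Real.log_mul (by positivity) (Real.exp_ne_zero _),
    Real.log_mul (by positivity) (Real.exp_ne_zero _),
    Real.log_exp, Real.log_exp, one_div, one_div, Real.log_inv, Real.log_inv,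
    Real.log_mul (by positivity) (by positivity),
    Real.log_mul (by positivity) (by positivity),
    Real.log_div (by positivity) (by positivity)]
  field_simp
  ring

/-- **Variance of the mismatched information density.**  Fix `σ > 0` and `x ∈ ℂ` with
`|x| = 1`.  If `y = x + σ·w` with `w ~ CN(0,1)`, then
`Var(i_M(x;y)) = 1 − 1/(1 + 1/σ²)²`. -/
theorem infoDensity_variance
    {Ω : Type*} [MeasureSpace Ω] [IsProbabilityMeasure (ℙ : Measure Ω)]
    (σ : ℝ) (hσ : 0 < σ) (x : ℂ) (hx : ‖x‖ = 1)
    (w : Ω → ℂ) (hw : Measurable w)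
    (hlaw : Measure.map w (ℙ : Measure Ω) = stdComplexGaussian)
    (f : Ω → ℝ) (hf : ∀ ω, f ω = infoDensity σ x (x + (σ : ℂ) * w ω)) :
    variance f (ℙ : Measure Ω) = 1 - 1 / (1 + 1 / σ ^ 2) ^ 2 := by
  have h1 : (0:ℝ) < 1+σ^2 := by positivity
  have hx2 : x.re^2 + x.im^2 = 1 := by rw [← csq, hx]; norm_num
  set L : ℝ := Real.log ((1+σ^2)/σ^2) with hL
  set G : ℂ → ℝ := fun z => L - ‖z‖^2 + (1/(1+σ^2)) * ‖x + σ*z‖^2 with hG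
  have hGmeas : Measurable G := by
    have : Continuous G := by
      apply Continuous.add
      · exact continuous_const.sub ((continuous_norm).pow 2)
      · exact continuous_const.mul (((continuous_const.add
          (continuous_const.mul continuous_id)).norm).pow 2)
    exact this.measurable
  have hfun : f = fun ω => G (w ω) := funext fun ω => by
    rw [hf ω, key σ hσ x (w ω)]
  set γ : Measure ℝ := gaussianReal 0 (1/2) with hγ
  set ι : ℝ × ℝ → ℂ := fun q => (q.1 : ℂ) + (q.2 : ℂ) * Complex.I with hι
  have hιmeas : Measurable ι :=
    (Complex.measurable_ofReal.comp measurable_fst).add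
      ((Complex.measurable_ofReal.comp measurable_snd).mul_const Complex.I)
  set K : ℝ := L + 1/(1+σ^2) with hK
  set A : ℝ := σ^2/(1+σ^2) - 1 with hA
  set B1 : ℝ := 2*σ*x.re/(1+σ^2) with hB1
  set B2 : ℝ := 2*σ*x.im/(1+σ^2) with hB2
  have hprod : (fun q : ℝ × ℝ => G (ι q))
      = fun q : ℝ × ℝ => (K + (A*q.1^2 + B1*q.1)) + (0 + (A*q.2^2 + B2*q.2)) := by
    funext q
    have hre : (x + σ * ι q).re = x.re + σ * q.1 := by
      simp [hι, Complex.add_re, Complex.mul_re]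
    have him : (x + σ * ι q).im = x.im + σ * q.2 := by
      simp [hι, Complex.add_im, Complex.mul_im]
    have hz : ‖ι q‖^2 = q.1^2 + q.2^2 := by
      rw [csq]
      simp [hι]
    rw [hG]
    simp only
    rw [hz, csq, hre, him, hK, hA, hB1, hB2]
    linear_combination (1/(1+σ^2)) * hx2
  calc variance f ℙ = variance G (Measure.map w ℙ) := by
        rw [hfun, variance_comp ℙ w hw G hGmeas]
    _ = variance (fun q : ℝ × ℝ => G (ι q)) (γ.prod γ) := by
        rw [hlaw, stdComplexGaussian, ← variance_comp (γ.prod γ) ι hιmeas G hGmeas]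
    _ = A^2/2 + B1^2/2 + (A^2/2 + B2^2/2) := by
        rw [hprod]
        have hX : (fun q : ℝ × ℝ => K + (A*q.1^2 + B1*q.1))
            = (fun t : ℝ => K + (A*t^2 + B1*t)) ∘ Prod.fst := rfl
        have hY : (fun q : ℝ × ℝ => 0 + (A*q.2^2 + B2*q.2))
            = (fun t : ℝ => 0 + (A*t^2 + B2*t)) ∘ Prod.snd := rfl
        have hindep : IndepFun (fun q : ℝ × ℝ => K + (A*q.1^2 + B1*q.1))
            (fun q : ℝ × ℝ => 0 + (A*q.2^2 + B2*q.2)) (γ.prod γ) := by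
          rw [hX, hY]
          exact (indep_fst_snd γ γ).comp (meas_quad K A B1) (meas_quad 0 A B2)
        have hmemX : MemLp (fun q : ℝ × ℝ => K + (A*q.1^2 + B1*q.1)) 2 (γ.prod γ) := by
          rw [hX, ← memLp_map_measure_iff (meas_quad K A B1).aestronglyMeasurable
            measurable_fst.aemeasurable]
          rw [Measure.map_fst_prod]
          simp only [measure_univ, one_smul]
          exact memLp_quad K A B1
        have hmemY : MemLp (fun q : ℝ × ℝ => 0 + (A*q.2^2 + B2*q.2)) 2 (γ.prod γ) := by
          rw [hY, ← memLp_map_measure_iff (meas_quad 0 A B2).aestronglyMeasurable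
            measurable_snd.aemeasurable]
          rw [Measure.map_snd_prod]
          simp only [measure_univ, one_smul]
          exact memLp_quad 0 A B2
        have hadd := hindep.variance_add hmemX hmemY
        have : (fun q : ℝ × ℝ => (K + (A*q.1^2 + B1*q.1)) + (0 + (A*q.2^2 + B2*q.2)))
            = (fun q : ℝ × ℝ => K + (A*q.1^2 + B1*q.1))
              + (fun q : ℝ × ℝ => 0 + (A*q.2^2 + B2*q.2)) := rfl
        rw [this, hadd]
        have v1 : variance (fun q : ℝ × ℝ => K + (A*q.1^2 + B1*q.1)) (γ.prod γ)
            = A^2/2 + B1^2/2 := by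
          rw [variance_comp (γ.prod γ) Prod.fst measurable_fst
              (fun t : ℝ => K + (A*t^2 + B1*t)) (meas_quad K A B1),
            Measure.map_fst_prod]
          simp only [measure_univ, one_smul]
          exact var_quad K A B1
        have v2 : variance (fun q : ℝ × ℝ => 0 + (A*q.2^2 + B2*q.2)) (γ.prod γ)
            = A^2/2 + B2^2/2 := by
          rw [variance_comp (γ.prod γ) Prod.snd measurable_snd
              (fun t : ℝ => 0 + (A*t^2 + B2*t)) (meas_quad 0 A B2),
            Measure.map_snd_prod]
          simp only [measure_univ, one_smul]
          exact var_quad 0 A B2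
        rw [v1, v2]
    _ = 1 - 1 / (1 + 1 / σ ^ 2) ^ 2 := by
        have hσ2 : (σ:ℝ)^2 ≠ 0 := by positivity
        have hB : B1^2 + B2^2 = 4*σ^2/(1+σ^2)^2 := by
          rw [hB1, hB2]
          field_simp
          linear_combination 4 * hx2
        have hcomb : A^2/2 + B1^2/2 + (A^2/2 + B2^2/2) = A^2 + (B1^2 + B2^2)/2 := by ring
        rw [hcomb, hB, hA]
        field_simp
        ring
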